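/- Let T = wT_φ on C(K) with φ a non-surjective homeomorphism of K into itself, L = ⋂_{n≥0} φⁿ(K). Then the upper semi-Fredholm spectrum of the restriction of T to C(L) is contained in the upper semi-Fredholm spectrum of T on C(K): σ₂(T, C(L)) ⊆ σ₂(T). -/

import Mathlib

set_option maxHeartbeats 1000000

open Filter Topology


lemma key_lemma {K : Type*} [TopologicalSpace K] [CompactSpace K] [T2Space K]
    (φ : K → K) (hφc : Continuous φ) (hφi : Function.Injective φ)
    (w : C(K, ℂ)) (L : Set K)
    (hL : L = ⋂ n : ℕ, φ^[n] '' Set.univ)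
    (hφL : ∀ k ∈ L, φ k ∈ L)
    (lam : ℂ) (f : C(L, ℂ)) (ε : ℝ) (hε0 : 0 < ε)
    (hε : ∀ x : L, ‖lam * f x - w x.1 * f ⟨φ x.1, hφL x.1 x.2⟩‖ < ε) :
    ∃ g : C(K, ℂ), (∀ x : L, g x.1 = f x) ∧ ∀ k : K, ‖lam * g k - w k * g (φ k)‖ ≤ ε := by
  have hKn : ∀ n, IsCompact (φ^[n] '' Set.univ) := fun n =>
    isCompact_univ.image (hφc.iterate n)
  have hLc : IsClosed L := by
    rw [hL]; exact isClosed_iInter fun n => (hKn n).isClosed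
  have hLsub : ∀ n, L ⊆ φ^[n] '' Set.univ := by
    rw [hL]; exact fun n => Set.iInter_subset _ n
  have hback : ∀ k, φ k ∈ L → k ∈ L := by
    intro k hk
    rw [hL]; rw [hL] at hk
    refine Set.mem_iInter.2 fun n => ?_
    have := Set.mem_iInter.1 hk (n + 1)
    rw [Function.iterate_succ'] at this
    obtain ⟨x, -, hx⟩ := this
    exact ⟨x, Set.mem_univ x, hφi hx⟩
  have hiterL : ∀ (x : K), x ∈ L → ∀ n, φ^[n] x ∈ L := by
    intro x hx n
    induction n with
    | zero => simpa using hx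
    | succ n ih => rw [Function.iterate_succ_apply']; exact hφL _ ih
  -- Tietze extension
  obtain ⟨g0, hg0⟩ := ContinuousMap.exists_restrict_eq hLc f
  have hg0' : ∀ x : L, g0 x.1 = f x := fun x => by rw [← hg0, ContinuousMap.restrict_apply]
  -- the defect function of g0
  set A0 : K → ℂ := fun k => lam * g0 k - w k * g0 (φ k) with hA0
  have hA0c : Continuous A0 := by
    exact (continuous_const.mul g0.continuous).sub
      (w.continuous.mul (g0.continuous.comp hφc))
  set Ω : Set K := {k | ‖A0 k‖ < ε} with hΩ
  have hΩo : IsOpen Ω := isOpen_lt (by fun_prop) continuous_const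
  have hLΩ : L ⊆ Ω := by
    intro x hx
    have h1 : g0 x = f ⟨x, hx⟩ := hg0' ⟨x, hx⟩
    have h2 : g0 (φ x) = f ⟨φ x, hφL x hx⟩ := hg0' ⟨φ x, hφL x hx⟩
    have := hε ⟨x, hx⟩
    simpa [hΩ, hA0, h1, h2] using this
  by_cases hlam : lam = 0
  · -- case lam = 0 : multiply extension by a cutoff
    have hs : IsClosed (φ '' Ωᶜ) :=
      ((hΩo.isClosed_compl).isCompact.image hφc).isClosed
    have hdisj : Disjoint (φ '' Ωᶜ) L := by
      rw [Set.disjoint_left]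
      rintro x ⟨y, hy, rfl⟩ hxL
      exact hy (hLΩ (hback y hxL))
    obtain ⟨χ, hχ0, hχ1, hχ01⟩ := exists_continuous_zero_one_of_isClosed hs hLc hdisj
    refine ⟨⟨fun k => (χ k : ℂ) * g0 k, by fun_prop⟩, ?_, ?_⟩
    · intro x
      have : χ x.1 = 1 := hχ1 x.2
      simp [this, hg0' x]
    · intro k
      subst hlam
      have hexp : (0 : ℂ) * ((χ k : ℂ) * g0 k) - w k * ((χ (φ k) : ℂ) * g0 (φ k))
          = (χ (φ k) : ℂ) * A0 k := by
        simp only [hA0]; ring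
      simp only [ContinuousMap.coe_mk]
      rw [hexp]
      by_cases hk : k ∈ Ω
      · have h1 : ‖A0 k‖ < ε := hk
        have h2 : ‖((χ (φ k) : ℝ) : ℂ)‖ ≤ 1 := by
          rw [Complex.norm_real]
          have := hχ01 (φ k)
          rw [Real.norm_eq_abs, abs_le]
          constructor <;> linarith [this.1, this.2]
        calc ‖((χ (φ k) : ℝ) : ℂ) * A0 k‖ = ‖((χ (φ k) : ℝ) : ℂ)‖ * ‖A0 k‖ := norm_mul _ _
        _ ≤ 1 * ε := by
            apply mul_le_mul h2 h1.le (norm_nonneg _) zero_le_one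
        _ = ε := one_mul ε
      · have : χ (φ k) = 0 := hχ0 ⟨k, hk, rfl⟩
        simp [this]
        linarith
  · -- case lam ≠ 0
    -- find m with φ^[m] '' univ ⊆ Ω
    have hmono : Antitone (fun n => φ^[n] '' (Set.univ : Set K)) := by
      apply antitone_nat_of_succ_le
      intro n
      rw [Function.iterate_succ]
      rw [Set.image_comp]
      exact Set.image_mono (Set.subset_univ _)
    obtain ⟨u, hu⟩ := (hΩo.isClosed_compl).isCompact.elim_finite_subfamily_closed
      (fun n => φ^[n] '' Set.univ) (fun n => (hKn n).isClosed)
      (by rw [← hL]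
          rw [Set.eq_empty_iff_forall_notMem]
          rintro x ⟨hx1, hx2⟩
          exact hx1 (hLΩ hx2))
    set m : ℕ := u.sup id with hm
    have hKm : φ^[m] '' Set.univ ⊆ Ω := by
      intro k hk
      by_contra hkΩ
      have : k ∈ Ωᶜ ∩ ⋂ i ∈ u, φ^[i] '' Set.univ := by
        refine ⟨hkΩ, Set.mem_iInter₂.2 fun i hi => ?_⟩
        exact hmono (Finset.le_sup (f := id) hi) hk
      rw [hu] at this
      exact this
    obtain ⟨v, hv0, hv1, hv01⟩ := exists_continuous_zero_one_of_isClosed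
      (hΩo.isClosed_compl) (hKn m).isClosed
      (by rw [Set.disjoint_left]; exact fun x hx hx2 => hx (hKm hx2))
    -- ψ = (v - 1) * A0, vanishes outside... vanishes on φ^[m]''univ, and on L
    set ψ : K → ℂ := fun k => ((v k : ℂ) - 1) * A0 k with hψ
    have hψc : Continuous ψ := by fun_prop
    have hψm : ∀ k, k ∈ φ^[m] '' Set.univ → ψ k = 0 := by
      intro k hk
      have : v k = 1 := hv1 hk
      simp [hψ, this]
    have hψL : ∀ x ∈ L, ψ x = 0 := fun x hx => hψm x (hLsub m hx)
    -- the correction h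
    set h : K → ℂ := fun k => ∑ n ∈ Finset.range m,
      (lam⁻¹)^(n+1) * ((∏ j ∈ Finset.range n, w (φ^[j] k)) * ψ (φ^[n] k)) with hh
    have hhc : Continuous h := by
      apply continuous_finset_sum
      intro n _
      apply Continuous.mul continuous_const
      apply Continuous.mul
      · apply continuous_finset_prod
        intro j _
        exact w.continuous.comp (hφc.iterate j)
      · exact hψc.comp (hφc.iterate n)
    -- telescoping identity
    have hkey : ∀ k, lam * h k - w k * h (φ k) = ψ k := by
      intro k
      set a : ℕ → ℂ := fun n =>
        (lam⁻¹)^n * ((∏ j ∈ Finset.range n, w (φ^[j] k)) * ψ (φ^[n] k)) with ha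
      have h1 : lam * h k = ∑ n ∈ Finset.range m, a n := by
        rw [hh, Finset.mul_sum]
        apply Finset.sum_congr rfl
        intro n _
        rw [ha, pow_succ]
        field_simp
      have h2 : w k * h (φ k) = ∑ n ∈ Finset.range m, a (n+1) := by
        rw [hh, Finset.mul_sum]
        apply Finset.sum_congr rfl
        intro n _
        show w k * (lam⁻¹ ^ (n+1) * ((∏ j ∈ Finset.range n, w (φ^[j] (φ k))) * ψ (φ^[n] (φ k))))
            = lam⁻¹ ^ (n+1) * ((∏ j ∈ Finset.range (n+1), w (φ^[j] k)) * ψ (φ^[n+1] k))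
        simp only [← Function.iterate_succ_apply]
        rw [Finset.prod_range_succ']
        simp only [Function.iterate_zero_apply]
        ring
      have ham : a m = 0 := by
        have hz : ψ (φ^[m] k) = 0 := hψm _ ⟨k, Set.mem_univ k, rfl⟩
        show lam⁻¹ ^ m * ((∏ j ∈ Finset.range m, w (φ^[j] k)) * ψ (φ^[m] k)) = 0
        rw [hz]; ring
      have ha0 : a 0 = ψ k := by simp [ha]
      rw [h1, h2, ← Finset.sum_sub_distrib, Finset.sum_range_sub' a m, ham, ha0]
      ring
    refine ⟨g0 + ⟨h, hhc⟩, ?_, ?_⟩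
    · intro x
      have hx0 : h x.1 = 0 := by
        rw [hh]
        apply Finset.sum_eq_zero
        intro n _
        rw [hψL _ (hiterL x.1 x.2 n)]
        ring
      simp [hx0, hg0' x]
    · intro k
      have hexp : lam * (g0 + ⟨h, hhc⟩) k - w k * (g0 + ⟨h, hhc⟩) (φ k)
          = (v k : ℂ) * A0 k := by
        simp only [ContinuousMap.add_apply, ContinuousMap.coe_mk]
        have hkk := hkey k
        simp only [hψ, hA0] at hkk ⊢
        linear_combination hkk
      rw [hexp]
      by_cases hk : k ∈ Ω
      · have h1 : ‖A0 k‖ < ε := hk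
        have h2 : ‖((v k : ℝ) : ℂ)‖ ≤ 1 := by
          rw [Complex.norm_real]
          have := hv01 k
          rw [Real.norm_eq_abs, abs_le]
          constructor <;> linarith [this.1, this.2]
        calc ‖((v k : ℝ) : ℂ) * A0 k‖ = ‖((v k : ℝ) : ℂ)‖ * ‖A0 k‖ := norm_mul _ _
        _ ≤ 1 * ε := mul_le_mul h2 h1.le (norm_nonneg _) zero_le_one
        _ = ε := one_mul ε
      · have : v k = 0 := hv0 hk
        simp [this]
        linarith

theorem stmt11_main {K : Type*} [TopologicalSpace K] [CompactSpace K] [T2Space K]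
    (φ : K → K) (hφc : Continuous φ) (hφi : Function.Injective φ)
    (w : C(K, ℂ)) (T : C(K, ℂ) →L[ℂ] C(K, ℂ))
    (hT : ∀ (f : C(K, ℂ)) (k : K), T f k = w k * f (φ k))
    (L : Set K) [CompactSpace L]
    (hL : L = ⋂ n : ℕ, φ^[n] '' Set.univ)
    (hφL : ∀ k ∈ L, φ k ∈ L)
    (TL : C(L, ℂ) →L[ℂ] C(L, ℂ))
    (hTL : ∀ (f : C(L, ℂ)) (k : L), TL f k = w k.1 * f ⟨φ k.1, hφL k.1 k.2⟩)
    (lam : ℂ)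
    (hclosed : IsClosed (Set.range (lam • ContinuousLinearMap.id ℂ C(K, ℂ) - T)))
    (hfd : FiniteDimensional ℂ (LinearMap.ker ((lam • ContinuousLinearMap.id ℂ C(K, ℂ) - T : C(K, ℂ) →L[ℂ] C(K, ℂ)) : C(K, ℂ) →ₗ[ℂ] C(K, ℂ)))) :
    IsClosed (Set.range (lam • ContinuousLinearMap.id ℂ C(L, ℂ) - TL)) ∧
      FiniteDimensional ℂ (LinearMap.ker ((lam • ContinuousLinearMap.id ℂ C(L, ℂ) - TL : C(L, ℂ) →L[ℂ] C(L, ℂ)) : C(L, ℂ) →ₗ[ℂ] C(L, ℂ))) := by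
  haveI := hfd
  set A : C(K, ℂ) →L[ℂ] C(K, ℂ) := lam • ContinuousLinearMap.id ℂ C(K, ℂ) - T with hAdef
  set AL : C(L, ℂ) →L[ℂ] C(L, ℂ) := lam • ContinuousLinearMap.id ℂ C(L, ℂ) - TL with hALdef
  have hA : ∀ (g : C(K, ℂ)) (k : K), A g k = lam * g k - w k * g (φ k) := by
    intro g k
    simp [hAdef, ContinuousLinearMap.sub_apply, ContinuousLinearMap.smul_apply,
      ContinuousMap.sub_apply, ContinuousMap.smul_apply, hT g k, smul_eq_mul]
  have hAL : ∀ (f : C(L, ℂ)) (x : L), AL f x = lam * f x - w x.1 * f ⟨φ x.1, hφL x.1 x.2⟩ := by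
    intro f x
    simp [hALdef, ContinuousLinearMap.sub_apply, ContinuousLinearMap.smul_apply,
      ContinuousMap.sub_apply, ContinuousMap.smul_apply, hTL f x, smul_eq_mul]
  -- restriction as a linear map
  have hres : ∀ (g g' : C(K, ℂ)) (x : L), (g + g').restrict L x = g.restrict L x + g'.restrict L x :=
    fun _ _ _ => rfl
  set Rlin : C(K, ℂ) →ₗ[ℂ] C(L, ℂ) :=
    { toFun := fun g => g.restrict L
      map_add' := fun g g' => by ext x; rfl
      map_smul' := fun c g => by ext x; rfl } with hRlin
  -- open mapping estimate for A
  have hrange_closed : IsClosed ((LinearMap.range (A : C(K, ℂ) →ₗ[ℂ] C(K, ℂ)) : Submodule ℂ C(K, ℂ)) : Set C(K, ℂ)) := by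
    rw [LinearMap.coe_range]; exact hclosed
  haveI : CompleteSpace (LinearMap.range (A : C(K, ℂ) →ₗ[ℂ] C(K, ℂ))) := hrange_closed.completeSpace_coe
  have hsurj : Function.Surjective
      (A.codRestrict (LinearMap.range (A : C(K, ℂ) →ₗ[ℂ] C(K, ℂ))) (fun x => LinearMap.mem_range_self _ x)) := by
    rintro ⟨y, x, rfl⟩
    exact ⟨x, rfl⟩
  obtain ⟨C, hC0, hCp⟩ :=
    (A.codRestrict (LinearMap.range (A : C(K, ℂ) →ₗ[ℂ] C(K, ℂ))) (fun x => LinearMap.mem_range_self _ x)).exists_preimage_norm_le hsurj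
  have homt : ∀ g : C(K, ℂ), ∃ x, A x = A g ∧ ‖x‖ ≤ C * ‖A g‖ := by
    intro g
    obtain ⟨x, hx1, hx2⟩ := hCp ⟨A g, LinearMap.mem_range_self _ g⟩
    refine ⟨x, ?_, ?_⟩
    · have := congrArg Subtype.val hx1
      simpa using this
    · exact hx2
  set V : Submodule ℂ C(L, ℂ) := (LinearMap.ker (A : C(K, ℂ) →ₗ[ℂ] C(K, ℂ))).map Rlin with hV
  haveI hVfd : FiniteDimensional ℂ V := Module.Finite.map _ _
  -- the key inequality
  have hineq : ∀ (f : C(L, ℂ)) (δ : ℝ), 0 < δ → ∃ v ∈ V, ‖f - v‖ ≤ C * (‖AL f‖ + δ) := by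
    intro f δ hδ
    set ε : ℝ := ‖AL f‖ + δ with hε
    have hε0 : 0 < ε := lt_of_lt_of_le hδ (by simp [hε, norm_nonneg])
    have hεb : ∀ x : L, ‖lam * f x - w x.1 * f ⟨φ x.1, hφL x.1 x.2⟩‖ < ε := by
      intro x
      rw [← hAL f x]
      exact lt_of_le_of_lt (ContinuousMap.norm_coe_le_norm (AL f) x) (by simp [hε, hδ])
    obtain ⟨g, hgL, hgb⟩ := key_lemma φ hφc hφi w L hL hφL lam f ε hε0 hεb
    have hAg : ‖A g‖ ≤ ε :=
      (ContinuousMap.norm_le (A g) hε0.le).2 (fun k => by rw [hA g k]; exact hgb k)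
    obtain ⟨x, hxA, hxn⟩ := homt g
    have hker : g - x ∈ LinearMap.ker (A : C(K, ℂ) →ₗ[ℂ] C(K, ℂ)) := by
      rw [LinearMap.mem_ker, ContinuousLinearMap.coe_coe, map_sub, hxA, sub_self]
    refine ⟨Rlin (g - x), Submodule.mem_map_of_mem hker, ?_⟩
    have hfv : ∀ z : L, (f - Rlin (g - x)) z = x z.1 := by
      intro z
      have h1 : f z = g z.1 := (hgL z).symm
      simp [hRlin, ContinuousMap.sub_apply, ContinuousMap.restrict_apply, h1]
    have : ‖f - Rlin (g - x)‖ ≤ C * ε := by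
      apply (ContinuousMap.norm_le _ (by positivity)).2
      intro z
      rw [hfv z]
      exact le_trans (ContinuousMap.norm_coe_le_norm x z.1)
        (le_trans hxn (by nlinarith [norm_nonneg (A g)]))
    exact this
  constructor
  · -- closed range
    set W : Submodule ℂ C(L, ℂ) := V.map (AL : C(L, ℂ) →ₗ[ℂ] C(L, ℂ)) with hW
    haveI hWfd : FiniteDimensional ℂ W := Module.Finite.map _ _
    have hWc : IsClosed (W : Set C(L, ℂ)) := Submodule.closed_of_finiteDimensional _
    apply isClosed_of_closure_subset
    intro y hy
    have hchoice : ∀ n : ℕ, ∃ fc : C(L, ℂ), dist y (AL fc) < (1/2 : ℝ)^n := by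
      intro n
      obtain ⟨b, hbmem, hb⟩ := Metric.mem_closure_iff.1 hy ((1/2 : ℝ)^n) (by positivity)
      obtain ⟨fc, rfl⟩ := hbmem
      exact ⟨fc, hb⟩
    choose F hF using hchoice
    have hd : ∀ n : ℕ, ‖AL (F (n+1) - F n)‖ ≤ 2 * (1/2 : ℝ)^n := by
      intro n
      rw [map_sub]
      have h1 := (hF (n+1)).le
      have h2 := (hF n).le
      calc ‖AL (F (n+1)) - AL (F n)‖ = dist (AL (F (n+1))) (AL (F n)) := (dist_eq_norm _ _).symm
      _ ≤ dist (AL (F (n+1))) y + dist y (AL (F n)) := dist_triangle _ _ _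
      _ ≤ (1/2 : ℝ)^(n+1) + (1/2 : ℝ)^n := by
          rw [dist_comm (AL (F (n+1))) y]
          exact add_le_add h1 h2
      _ ≤ 2 * (1/2 : ℝ)^n := by
          rw [pow_succ]
          nlinarith [pow_pos (by norm_num : (0:ℝ) < 1/2) n]
    have hev : ∀ n : ℕ, ∃ v, v ∈ V ∧ ‖(F (n+1) - F n) - v‖ ≤ C * 3 * (1/2 : ℝ)^n := by
      intro n
      obtain ⟨v, hvV, hv⟩ := hineq (F (n+1) - F n) ((1/2 : ℝ)^n) (by positivity)
      refine ⟨v, hvV, le_trans hv ?_⟩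
      have h3 := hd n
      nlinarith [pow_pos (by norm_num : (0:ℝ) < 1/2) n]
    choose vv hvV hvn using hev
    set e : ℕ → C(L, ℂ) := fun n => (F (n+1) - F n) - vv n with he
    have hsummable : Summable e := by
      apply Summable.of_norm_bounded (g := fun n => C * 3 * (1/2 : ℝ)^n)
      · exact (summable_geometric_of_lt_one (by norm_num) (by norm_num)).mul_left _
      · exact fun n => hvn n
    obtain ⟨E, hE⟩ := hsummable
    have hsn : Tendsto (fun n => ∑ i ∈ Finset.range n, e i) atTop (𝓝 E) := hE.tendsto_sum_nat
    have hFn : ∀ n, F n = F 0 + (∑ i ∈ Finset.range n, e i) + (∑ i ∈ Finset.range n, vv i) := by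
      intro n
      induction n with
      | zero => simp
      | succ n ih =>
        rw [Finset.sum_range_succ, Finset.sum_range_succ]
        have hen : e n = (F (n+1) - F n) - vv n := rfl
        rw [hen]
        linear_combination ih
    have htend1 : Tendsto (fun n => AL (F n)) atTop (𝓝 y) := by
      rw [tendsto_iff_dist_tendsto_zero]
      have hb : ∀ n : ℕ, dist (AL (F n)) y ≤ (1/2 : ℝ)^n := by
        intro n; rw [dist_comm]; exact (hF n).le
      exact squeeze_zero (fun n => dist_nonneg) hb
        (tendsto_pow_atTop_nhds_zero_of_lt_one (by norm_num) (by norm_num))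
    have htend2 : Tendsto (fun n => AL (∑ i ∈ Finset.range n, e i)) atTop (𝓝 (AL E)) :=
      (AL.continuous.tendsto E).comp hsn
    have htendσ : Tendsto (fun n => AL (∑ i ∈ Finset.range n, vv i)) atTop
        (𝓝 (y - AL (F 0) - AL E)) := by
      have heq : (fun n => AL (∑ i ∈ Finset.range n, vv i))
          = fun n => AL (F n) - AL (F 0) - AL (∑ i ∈ Finset.range n, e i) := by
        funext n
        rw [← map_sub, ← map_sub]
        congr 1
        have h5 := hFn n
        rw [h5]
        abel
      rw [heq]
      exact (htend1.sub tendsto_const_nhds).sub htend2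
    have hmem : y - AL (F 0) - AL E ∈ W := by
      apply hWc.mem_of_tendsto htendσ
      filter_upwards with n
      exact Submodule.mem_map_of_mem (Submodule.sum_mem V (fun i _ => hvV i))
    obtain ⟨v', hv'V, hv'⟩ := hmem
    have hv'' : AL v' = y - AL (F 0) - AL E := hv'
    refine ⟨F 0 + E + v', ?_⟩
    show AL (F 0 + E + v') = y
    rw [map_add, map_add, hv'']
    abel
  · -- finite-dimensional kernel
    have hker_le : LinearMap.ker (AL : C(L, ℂ) →ₗ[ℂ] C(L, ℂ)) ≤ V := by
      intro f hf
      rw [LinearMap.mem_ker, ContinuousLinearMap.coe_coe] at hf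
      have hcl : f ∈ closure (V : Set C(L, ℂ)) := by
        rw [Metric.mem_closure_iff]
        intro η hη
        obtain ⟨v, hvV, hv⟩ := hineq f (η / (2 * (C + 1))) (by positivity)
        refine ⟨v, hvV, ?_⟩
        rw [dist_eq_norm]
        calc ‖f - v‖ ≤ C * (‖AL f‖ + η / (2 * (C + 1))) := hv
        _ = C * (η / (2 * (C + 1))) := by rw [hf]; simp
        _ < η := by
            have ht : 0 < η / (2 * (C + 1)) := by positivity
            have he : 2 * (C + 1) * (η / (2 * (C + 1))) = η := by field_simp
            nlinarith [ht, hC0]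
      have hVc : IsClosed (V : Set C(L, ℂ)) := Submodule.closed_of_finiteDimensional V
      rwa [hVc.closure_eq] at hcl
    exact Submodule.finiteDimensional_of_le hker_le


/-- `σ₂(T, C(L)) ⊆ σ₂(T)` : if `λI - T` is upper semi-Fredholm on `C(K)`
then `λI - T` is upper semi-Fredholm on `C(L)` (contrapositive form of the inclusion of
upper semi-Fredholm spectra). -/
theorem stmt11 (K : Type*) [TopologicalSpace K] [CompactSpace K] [T2Space K]
    (φ : K → K) (hφc : Continuous φ) (hφi : Function.Injective φ)
    (hns : Set.range φ ≠ Set.univ)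
    (w : C(K, ℂ)) (T : C(K, ℂ) →L[ℂ] C(K, ℂ))
    (hT : ∀ (f : C(K, ℂ)) (k : K), T f k = w k * f (φ k))
    (L : Set K) [CompactSpace L]
    (hL : L = ⋂ n : ℕ, φ^[n] '' Set.univ)
    (hφL : ∀ k ∈ L, φ k ∈ L)
    (TL : C(L, ℂ) →L[ℂ] C(L, ℂ))
    (hTL : ∀ (f : C(L, ℂ)) (k : L), TL f k = w k.1 * f ⟨φ k.1, hφL k.1 k.2⟩) :
    {lam : ℂ | ¬ (IsClosed (Set.range (lam • ContinuousLinearMap.id ℂ C(L, ℂ) - TL)) ∧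
        FiniteDimensional ℂ (LinearMap.ker ((lam • ContinuousLinearMap.id ℂ C(L, ℂ) - TL : C(L, ℂ) →L[ℂ] C(L, ℂ)) : C(L, ℂ) →ₗ[ℂ] C(L, ℂ))))}
      ⊆ {lam : ℂ | ¬ (IsClosed (Set.range (lam • ContinuousLinearMap.id ℂ C(K, ℂ) - T)) ∧
        FiniteDimensional ℂ (LinearMap.ker ((lam • ContinuousLinearMap.id ℂ C(K, ℂ) - T : C(K, ℂ) →L[ℂ] C(K, ℂ)) : C(K, ℂ) →ₗ[ℂ] C(K, ℂ))))} := by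
  intro lam hlam hK
  exact hlam (stmt11_main φ hφc hφi w T hT L hL hφL TL hTL lam hK.1 hK.2)
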